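/- Let d ≥ 1 and let R₀ be a Borel subset of (-1/2, 1/2]^d that contains an open neighborhood of the origin and satisfies the boundary condition. Let Δₙ and ₛΔₙ be d × d diagonal matrices with positive diagonal entries λ₁⁽ⁿ⁾, …, λ_d⁽ⁿ⁾ and ₛλ₁⁽ⁿ⁾, …, ₛλ_d⁽ⁿ⁾ respectively, satisfying Assumption A.2: Σᵢ 1/ₛλᵢ⁽ⁿ⁾ + Σᵢ ₛλᵢ⁽ⁿ⁾/λᵢ⁽ⁿ⁾ + det(ₛΔₙ)^{(d+1)/d}/det(Δₙ) → 0 and max₁≤i≤d λᵢ⁽ⁿ⁾ = O(min₁≤i≤d λᵢ⁽ⁿ⁾). Define J_OL = {i ∈ Z^d : i + ₛΔₙR₀ ⊆ ΔₙR₀}, and for k ∈ Z^d define Jₙ(k) = #{i ∈ J_OL : i + k + ₛΔₙR₀ ⊆ ΔₙR₀} and Eₙ = {k = (k₁,…,k_d) ∈ Z^d : |k_j| ≤ ₛλ_j⁽ⁿ⁾ for j = 1,…,d}. Then max_{k ∈ Eₙ} |1 − Jₙ(k)/#J_OL| → 0 as n → ∞ (in particular #J_OL > 0 for all large n). -/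

import Mathlib

open Set Filter Topology

lemma aux_ncard_univ_pi {d : ℕ} (S : Fin d → Set ℤ) :
    (Set.univ.pi S).ncard = ∏ m, (S m).ncard := by
  rw [← Nat.card_coe_set_eq, Nat.card_congr (Equiv.Set.univPi S), Nat.card_pi]
  simp [Nat.card_coe_set_eq]

lemma aux_finite_Icc (l u : ℝ) : {t : ℤ | (t:ℝ) ∈ Set.Icc l u}.Finite := by
  apply Set.Finite.subset (Set.finite_Icc ⌈l⌉ ⌊u⌋)
  intro t ht
  exact ⟨Int.ceil_le.2 ht.1, Int.le_floor.2 ht.2⟩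

lemma aux_count_le {l u : ℝ} (h : l ≤ u) :
    ({t : ℤ | (t:ℝ) ∈ Set.Icc l u}.ncard : ℝ) ≤ u - l + 1 := by
  have hsub : {t : ℤ | (t:ℝ) ∈ Set.Icc l u} ⊆ ↑(Finset.Icc ⌈l⌉ ⌊u⌋) := by
    intro t ht
    exact Finset.mem_coe.2 (Finset.mem_Icc.2 ⟨Int.ceil_le.2 ht.1, Int.le_floor.2 ht.2⟩)
  have h1 : {t : ℤ | (t:ℝ) ∈ Set.Icc l u}.ncard ≤ (Finset.Icc ⌈l⌉ ⌊u⌋).card := by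
    rw [← Set.ncard_coe_finset]
    exact Set.ncard_le_ncard hsub (Finset.finite_toSet _)
  calc ({t : ℤ | (t:ℝ) ∈ Set.Icc l u}.ncard : ℝ) ≤ ((Finset.Icc ⌈l⌉ ⌊u⌋).card : ℝ) := by
        exact_mod_cast h1
    _ ≤ u - l + 1 := by
        rw [Int.card_Icc]
        rcases le_or_gt (⌊u⌋ + 1 - ⌈l⌉) 0 with hc | hc
        · rw [Int.toNat_of_nonpos hc]; simp; linarith
        · have hcast : (((⌊u⌋ + 1 - ⌈l⌉).toNat : ℤ) : ℝ) = ((⌊u⌋:ℝ) + 1 - ⌈l⌉) := by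
            rw [Int.toNat_of_nonneg hc.le]; push_cast; ring
          have hgoal : (((⌊u⌋ + 1 - ⌈l⌉).toNat : ℕ) : ℝ) = ((⌊u⌋:ℝ) + 1 - ⌈l⌉) := by
            exact_mod_cast hcast
          rw [hgoal]
          have := Int.floor_le u
          have := Int.le_ceil l
          linarith

lemma aux_count_ge {b : ℝ} (hb : 1 ≤ b) :
    b ≤ ({t : ℤ | |(t:ℝ)| ≤ b}.ncard : ℝ) := by
  have heq : {t : ℤ | |(t:ℝ)| ≤ b} = {t : ℤ | (t:ℝ) ∈ Set.Icc (-b) b} := by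
    ext t; simp [abs_le]
  have hsub : ↑(Finset.Icc (-⌊b⌋) ⌊b⌋) ⊆ {t : ℤ | |(t:ℝ)| ≤ b} := by
    intro t ht
    simp only [Finset.coe_Icc, Set.mem_Icc] at ht
    simp only [Set.mem_setOf_eq, abs_le]
    constructor
    · calc (-b : ℝ) ≤ -(⌊b⌋:ℝ) := by have := Int.floor_le b; linarith
        _ ≤ t := by exact_mod_cast ht.1
    · calc (t:ℝ) ≤ (⌊b⌋:ℝ) := by exact_mod_cast ht.2
        _ ≤ b := Int.floor_le b
  have hfin : {t : ℤ | |(t:ℝ)| ≤ b}.Finite := heq ▸ aux_finite_Icc (-b) b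
  have h1 : (Finset.Icc (-⌊b⌋) ⌊b⌋).card ≤ {t : ℤ | |(t:ℝ)| ≤ b}.ncard := by
    rw [← Set.ncard_coe_finset]
    exact Set.ncard_le_ncard hsub hfin
  have h2 : b ≤ ((Finset.Icc (-⌊b⌋) ⌊b⌋).card : ℝ) := by
    rw [Int.card_Icc]
    have h3 : (0:ℤ) ≤ ⌊b⌋ + 1 - (-⌊b⌋) := by
      have : (1:ℤ) ≤ ⌊b⌋ := Int.le_floor.2 (by exact_mod_cast hb)
      omega
    have hcast : (((⌊b⌋ + 1 - -⌊b⌋).toNat : ℤ) : ℝ) = (2*(⌊b⌋:ℝ) + 1) := by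
      rw [Int.toNat_of_nonneg h3]; push_cast; ring
    have hgoal : (((⌊b⌋ + 1 - -⌊b⌋).toNat : ℕ) : ℝ) = (2*(⌊b⌋:ℝ) + 1) := by
      exact_mod_cast hcast
    rw [hgoal]
    have hbf : b - 1 < (⌊b⌋:ℝ) := by have := Int.sub_one_lt_floor b; linarith
    linarith
  calc b ≤ ((Finset.Icc (-⌊b⌋) ⌊b⌋).card : ℝ) := h2
    _ ≤ _ := by exact_mod_cast h1

lemma aux_fiber_count {α β : Type*} {s : Set α} {t : Set β} (hs : s.Finite) (ht : t.Finite)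
    {f : α → β} (hmaps : ∀ x ∈ s, f x ∈ t) {M : ℝ} (hM : 0 ≤ M)
    (hfib : ∀ y ∈ t, (({x ∈ s | f x = y}).ncard : ℝ) ≤ M) :
    (s.ncard : ℝ) ≤ t.ncard * M := by
  classical
  set M' := ⌊M⌋₊ with hM'
  have hfib' : ∀ y ∈ ht.toFinset, (hs.toFinset.filter fun x => f x = y).card ≤ M' := by
    intro y hy
    rw [Set.Finite.mem_toFinset] at hy
    have : ({x ∈ s | f x = y}).ncard = (hs.toFinset.filter fun x => f x = y).card := by
      rw [← Set.ncard_coe_finset]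
      congr 1
      ext x
      simp [Set.Finite.mem_toFinset]
    exact Nat.le_floor (by rw [← this]; exact hfib y hy)
  have hmaps' : ∀ x ∈ hs.toFinset, f x ∈ ht.toFinset := by
    intro x hx
    rw [Set.Finite.mem_toFinset] at hx ⊢
    exact hmaps x hx
  have := Finset.card_le_mul_card_image_of_maps_to hmaps' M' hfib'
  have hcards : s.ncard = hs.toFinset.card := Set.ncard_eq_toFinset_card _ hs
  have hcardt : t.ncard = ht.toFinset.card := Set.ncard_eq_toFinset_card _ ht
  calc (s.ncard : ℝ) ≤ (M' * ht.toFinset.card : ℕ) := by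
        rw [hcards]; exact_mod_cast this
    _ ≤ t.ncard * M := by
        rw [hcardt]
        push_cast
        rw [mul_comm]
        exact mul_le_mul_of_nonneg_left (Nat.floor_le hM) (by positivity)

lemma aux_mem_J_iff {d : ℕ} (R₀ : Set (Fin d → ℝ)) (lam slam c : Fin d → ℝ)
    (hl : ∀ m, 0 < lam m) :
    ((fun x m => c m + slam m * x m) '' R₀ ⊆ (fun x m => lam m * x m) '' R₀) ↔
      ∀ x ∈ R₀, (fun m => (c m + slam m * x m) / lam m) ∈ R₀ := by
  constructor
  · intro h x hx
    obtain ⟨y, hy, hey⟩ := h ⟨x, hx, rfl⟩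
    have hyx : (fun m => (c m + slam m * x m) / lam m) = y := by
      funext m
      have hm := congrFun hey m
      simp only at hm
      rw [← hm, mul_div_cancel_left₀ _ (hl m).ne']
    rwa [hyx]
  · rintro h _ ⟨x, hx, rfl⟩
    refine ⟨_, h x hx, funext fun m => ?_⟩
    simp only
    rw [mul_comm, div_mul_cancel₀ _ (hl m).ne']
lemma aux_segment_frontier {d : ℕ} {R₀ : Set (Fin d → ℝ)} {p q : Fin d → ℝ}
    (hp : p ∈ R₀) (hq : q ∉ R₀) :
    ∃ w ∈ segment ℝ p q, w ∈ closure R₀ ∧ w ∈ closure R₀ᶜ := by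
  by_contra hcon
  push_neg at hcon
  have hsub : segment ℝ p q ⊆ interior R₀ ∪ (closure R₀)ᶜ := by
    intro w hw
    by_cases hw1 : w ∈ closure R₀
    · left
      have hw2 : w ∉ closure R₀ᶜ := fun h2 => hcon w hw hw1 h2
      rw [closure_compl] at hw2
      simpa using hw2
    · right; exact hw1
  have hdisj : Disjoint (interior R₀) (closure R₀)ᶜ :=
    Set.disjoint_left.2 fun x hx hx2 => hx2 (subset_closure (interior_subset hx))
  rcases (convex_segment p q).isPreconnected.subset_or_subset isOpen_interior
      isClosed_closure.isOpen_compl hdisj hsub with h | h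
  · exact hq (interior_subset (h (right_mem_segment ℝ p q)))
  · exact (h (left_mem_segment ℝ p q)) (subset_closure hp)

lemma aux_segment_coord {d : ℕ} {p q w : Fin d → ℝ} (hw : w ∈ segment ℝ p q) (m : Fin d) :
    |w m - p m| ≤ |q m - p m| := by
  obtain ⟨α, β, hα, hβ, hαβ, rfl⟩ := hw
  have hkey : (α • p + β • q) m - p m = β * (q m - p m) := by
    simp only [Pi.add_apply, Pi.smul_apply, smul_eq_mul]
    have hα1 : α = 1 - β := by linarith
    rw [hα1]; ring
  rw [hkey, abs_mul]
  calc |β| * |q m - p m| ≤ 1 * |q m - p m| := by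
        apply mul_le_mul_of_nonneg_right _ (abs_nonneg _)
        rw [abs_of_nonneg hβ]; linarith
    _ = _ := one_mul _

open MeasureTheory

set_option maxHeartbeats 2000000 in
/-- Lemma 9.4: the number of overlapping subsampling positions whose
`k`-translate also fits inside `Rₙ` is asymptotically the same as `#J_OL`,
uniformly over `k ∈ Eₙ`. -/
theorem stmt_2 (d : ℕ) (hd : 1 ≤ d)
    (R₀ : Set (Fin d → ℝ)) (hmeas : MeasurableSet R₀)
    (hsub : R₀ ⊆ Set.univ.pi fun _ => Set.Ioc (-(1/2) : ℝ) (1/2))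
    (hnbhd : R₀ ∈ 𝓝 (0 : Fin d → ℝ))
    (hbdry : ∃ C : ℝ, 0 < C ∧ ∀ a : ℝ, 0 < a → a ≤ 1 →
      (Set.ncard {j : Fin d → ℤ |
        (Set.univ.pi (fun i => Set.Icc (a * (j i : ℝ)) (a * ((j i : ℝ) + 1))) ∩
          closure R₀).Nonempty ∧
        (Set.univ.pi (fun i => Set.Icc (a * (j i : ℝ)) (a * ((j i : ℝ) + 1))) ∩
          closure R₀ᶜ).Nonempty} : ℝ) ≤ C * a ^ ((1 : ℤ) - d))
    (lam slam : ℕ → Fin d → ℝ)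
    (hlpos : ∀ n i, 0 < lam n i) (hslpos : ∀ n i, 0 < slam n i)
    -- Assumption A.2 :
    (hA2 : Tendsto (fun n => (∑ i, 1 / slam n i) + (∑ i, slam n i / lam n i) +
        (∏ i, slam n i) ^ (((d : ℝ) + 1) / d) / ∏ i, lam n i) atTop (𝓝 0))
    (hmaxmin : ∃ C : ℝ, ∀ n i j, lam n i ≤ C * lam n j) :
    (∃ N : ℕ, ∀ n ≥ N, 0 < Set.ncard {v : Fin d → ℤ |
        (fun x m => (v m : ℝ) + slam n m * x m) '' R₀ ⊆ (fun x m => lam n m * x m) '' R₀}) ∧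
    ∀ ε : ℝ, 0 < ε → ∃ N : ℕ, ∀ n ≥ N, ∀ k : Fin d → ℤ,
      (∀ j, |(k j : ℝ)| ≤ slam n j) →
      |1 - (Set.ncard {v : Fin d → ℤ |
          ((fun x m => (v m : ℝ) + slam n m * x m) '' R₀ ⊆
            (fun x m => lam n m * x m) '' R₀) ∧
          (fun x m => ((v m : ℝ) + (k m : ℝ)) + slam n m * x m) '' R₀ ⊆
            (fun x m => lam n m * x m) '' R₀} : ℝ) /
        (Set.ncard {v : Fin d → ℤ |
          (fun x m => (v m : ℝ) + slam n m * x m) '' R₀ ⊆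
            (fun x m => lam n m * x m) '' R₀} : ℝ)| < ε := by
  classical
  haveI : Nonempty (Fin d) := ⟨⟨0, by omega⟩⟩
  obtain ⟨C, hC, hbd⟩ := hbdry
  have h0R : (0 : Fin d → ℝ) ∈ R₀ := mem_of_mem_nhds hnbhd
  have habs : ∀ x ∈ R₀, ∀ m, |x m| ≤ 1/2 := by
    intro x hx m
    have h1 := hsub hx m (Set.mem_univ m)
    rw [abs_le]; exact ⟨le_of_lt h1.1, h1.2⟩
  obtain ⟨εb, hεb, hball⟩ := Metric.mem_nhds_iff.1 hnbhd
  set δ : ℝ := min (εb/2) 1 with hδdef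
  have hδpos : 0 < δ := lt_min (by linarith) one_pos
  have hδ1 : δ ≤ 1 := min_le_right _ _
  have hbox : ∀ x : Fin d → ℝ, (∀ m, |x m| ≤ δ) → x ∈ R₀ := by
    intro x hx
    apply hball
    rw [Metric.mem_ball]
    have hle : dist x 0 ≤ δ := (dist_pi_le_iff hδpos.le).2 fun m => by
      rw [Real.dist_eq, Pi.zero_apply, sub_zero]; exact hx m
    have hlt : δ < εb := lt_of_le_of_lt (min_le_left _ _) (by linarith)
    linarith
  -- extract componentwise limits from A.2
  have h3nn : ∀ n, 0 ≤ (∏ i, slam n i) ^ (((d:ℝ)+1)/d) / ∏ i, lam n i :=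
    fun n => div_nonneg (Real.rpow_nonneg (Finset.prod_nonneg fun i _ => (hslpos n i).le) _)
      (Finset.prod_nonneg fun i _ => (hlpos n i).le)
  have h1nn : ∀ n, 0 ≤ ∑ i, 1 / slam n i :=
    fun n => Finset.sum_nonneg fun i _ => le_of_lt (one_div_pos.2 (hslpos n i))
  have h2nn : ∀ n, 0 ≤ ∑ i, slam n i / lam n i :=
    fun n => Finset.sum_nonneg fun i _ => le_of_lt (div_pos (hslpos n i) (hlpos n i))
  have hS : Tendsto (fun n => ∑ i, 1 / slam n i) atTop (𝓝 0) :=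
    squeeze_zero h1nn (fun n => by linarith [h2nn n, h3nn n]) hA2
  have hQ : Tendsto (fun n => ∑ i, slam n i / lam n i) atTop (𝓝 0) :=
    squeeze_zero h2nn (fun n => by linarith [h1nn n, h3nn n]) hA2
  have main : ∀ ε : ℝ, 0 < ε → ∃ N : ℕ, ∀ n ≥ N,
      (0 < Set.ncard {v : Fin d → ℤ |
        (fun x m => (v m : ℝ) + slam n m * x m) '' R₀ ⊆ (fun x m => lam n m * x m) '' R₀}) ∧
      ∀ k : Fin d → ℤ, (∀ j, |(k j : ℝ)| ≤ slam n j) →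
      |1 - (Set.ncard {v : Fin d → ℤ |
          ((fun x m => (v m : ℝ) + slam n m * x m) '' R₀ ⊆
            (fun x m => lam n m * x m) '' R₀) ∧
          (fun x m => ((v m : ℝ) + (k m : ℝ)) + slam n m * x m) '' R₀ ⊆
            (fun x m => lam n m * x m) '' R₀} : ℝ) /
        (Set.ncard {v : Fin d → ℤ |
          (fun x m => (v m : ℝ) + slam n m * x m) '' R₀ ⊆
            (fun x m => lam n m * x m) '' R₀} : ℝ)| < ε := by
    intro ε hε
    have hev : ∀ᶠ n in atTop, (∑ i, 1 / slam n i) < 1 ∧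
        3 * (∑ i, slam n i / lam n i) ≤ δ ∧
        3 * (∑ i, slam n i / lam n i) < ε * (δ/2)^d / (C * 5^d) := by
      have e1 := hS.eventually_lt_const one_pos
      have e2 := hQ.eventually_lt_const (show (0:ℝ) < δ/3 from div_pos hδpos (by norm_num))
      have e3 := hQ.eventually_lt_const
        (show (0:ℝ) < (ε * (δ/2)^d / (C * 5^d))/3 from div_pos (div_pos
          (mul_pos hε (pow_pos (by linarith : (0:ℝ) < δ/2) d))
          (mul_pos hC (by positivity))) (by norm_num))
      filter_upwards [e1, e2, e3] with n g1 g2 g3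
      exact ⟨g1, by linarith, by linarith⟩
    obtain ⟨N, hN⟩ := eventually_atTop.1 hev
    refine ⟨N, fun n hn => ?_⟩
    obtain ⟨c1, c2, c3⟩ := hN n hn
    set a : ℝ := 3 * ∑ i, slam n i / lam n i with ha_def
    have hapos : 0 < a := by
      have h1 : 0 < ∑ i, slam n i / lam n i :=
        Finset.sum_pos (fun i _ => div_pos (hslpos n i) (hlpos n i)) Finset.univ_nonempty
      rw [ha_def]; linarith
    have ha1 : a ≤ 1 := le_trans c2 hδ1
    have hslam1 : ∀ m, 1 ≤ slam n m := by
      intro m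
      by_contra hcon
      push_neg at hcon
      have h1 : 1 < 1 / slam n m := by rw [lt_div_iff₀ (hslpos n m)]; linarith
      have h2 : 1 / slam n m ≤ ∑ i, 1 / slam n i :=
        Finset.single_le_sum (fun i _ => le_of_lt (one_div_pos.2 (hslpos n i))) (Finset.mem_univ m)
      linarith
    have ha_ge : ∀ m, 3 * slam n m ≤ a * lam n m := by
      intro m
      have h2 : slam n m / lam n m ≤ ∑ i, slam n i / lam n i :=
        Finset.single_le_sum (fun i _ => le_of_lt (div_pos (hslpos n i) (hlpos n i)))
          (Finset.mem_univ m)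
      have h3 : 3 * (slam n m / lam n m) ≤ a := by rw [ha_def]; linarith
      calc 3 * slam n m = 3 * (slam n m / lam n m) * lam n m := by
            field_simp
            rw [mul_div_cancel_right₀ _ (hlpos n m).ne']
        _ ≤ a * lam n m := mul_le_mul_of_nonneg_right h3 (hlpos n m).le
    have halam : ∀ m, 3 ≤ a * lam n m := fun m => le_trans (by linarith [hslam1 m]) (ha_ge m)
    set JS : Set (Fin d → ℤ) := {v | (fun x m => (v m : ℝ) + slam n m * x m) '' R₀ ⊆
      (fun x m => lam n m * x m) '' R₀} with hJS_def
    set G : Set (Fin d → ℤ) := {v | ∀ z : Fin d → ℝ, (∀ m, |z m| ≤ 3/2 * slam n m) →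
      (fun m => ((v m : ℝ) + z m) / lam n m) ∈ R₀} with hG_def
    have hJmem : ∀ v : Fin d → ℤ, v ∈ JS ↔
        ∀ x ∈ R₀, (fun m => ((v m : ℝ) + slam n m * x m) / lam n m) ∈ R₀ :=
      fun v => aux_mem_J_iff R₀ (lam n) (slam n) (fun m => (v m : ℝ)) (hlpos n)
    have hGsubJ : G ⊆ JS := by
      intro v hv
      apply (hJmem v).2
      intro x hx
      exact hv (fun m => slam n m * x m) (fun m => by
        rw [abs_mul, abs_of_pos (hslpos n m)]
        have h1 := habs x hx m
        nlinarith [hslpos n m, abs_nonneg (x m)])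
    have hGsubK : ∀ k : Fin d → ℤ, (∀ j, |(k j:ℝ)| ≤ slam n j) → ∀ v ∈ G, v + k ∈ JS := by
      intro k hk v hv
      apply (hJmem (v + k)).2
      intro x hx
      have h1 := hv (fun m => (k m : ℝ) + slam n m * x m) (fun m => by
        have h2 := habs x hx m
        have h3 := hk m
        have h4 : |slam n m * x m| ≤ slam n m / 2 := by
          rw [abs_mul, abs_of_pos (hslpos n m)]
          nlinarith [hslpos n m, abs_nonneg (x m)]
        calc |(k m:ℝ) + slam n m * x m| ≤ |(k m:ℝ)| + |slam n m * x m| := abs_add_le _ _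
          _ ≤ 3/2 * slam n m := by linarith)
      refine Set.mem_of_eq_of_mem ?_ h1
      funext m
      simp only [Pi.add_apply]
      push_cast
      ring
    have hpmem : ∀ v ∈ JS, (fun m => (v m : ℝ) / lam n m) ∈ R₀ := by
      intro v hv
      have h1 := (hJmem v).1 hv 0 h0R
      refine Set.mem_of_eq_of_mem ?_ h1
      funext m
      simp
    have hJfin : JS.Finite := by
      apply Set.Finite.subset (Set.Finite.pi
        (fun m => aux_finite_Icc (-(lam n m / 2)) (lam n m / 2)))
      intro v hv m _
      have h1 := hpmem v hv
      have h2 : |(v m : ℝ) / lam n m| ≤ 1/2 := habs _ h1 m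
      have h3 := hlpos n m
      rw [abs_div, abs_of_pos h3, div_le_iff₀ h3] at h2
      have h4 : |(v m : ℝ)| ≤ lam n m / 2 := by linarith
      exact abs_le.1 h4
    set T : Set (Fin d → ℤ) := Set.univ.pi (fun m => {t : ℤ | |(t:ℝ)| ≤ δ/2 * lam n m})
      with hT_def
    have hTsubG : T ⊆ G := by
      intro v hv z hz
      apply hbox
      intro m
      have h1 : |(v m : ℝ)| ≤ δ/2 * lam n m := hv m (Set.mem_univ m)
      have h2 : |z m| ≤ 3/2 * slam n m := hz m
      have h3 : 3 * slam n m ≤ δ * lam n m :=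
        le_trans (ha_ge m) (mul_le_mul_of_nonneg_right c2 (hlpos n m).le)
      show |((v m : ℝ) + z m) / lam n m| ≤ δ
      rw [abs_div, abs_of_pos (hlpos n m), div_le_iff₀ (hlpos n m)]
      calc |(v m:ℝ) + z m| ≤ |(v m:ℝ)| + |z m| := abs_add_le _ _
        _ ≤ δ * lam n m := by linarith
    have hTcard : (δ/2)^d * ∏ m, lam n m ≤ (T.ncard : ℝ) := by
      rw [hT_def, aux_ncard_univ_pi]
      push_cast
      calc (δ/2)^d * ∏ m, lam n m = ∏ m : Fin d, (δ/2 * lam n m) := by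
            rw [Finset.prod_mul_distrib, Finset.prod_const, Finset.card_univ, Fintype.card_fin]
        _ ≤ ∏ m, (({t : ℤ | |(t:ℝ)| ≤ δ/2 * lam n m}).ncard : ℝ) := by
            apply Finset.prod_le_prod (fun m _ => mul_nonneg (by linarith) (hlpos n m).le)
            intro m _
            apply aux_count_ge
            have h1 := halam m
            have h2 : a * lam n m ≤ δ * lam n m :=
              mul_le_mul_of_nonneg_right c2 (hlpos n m).le
            linarith
    have h0T : (0 : Fin d → ℤ) ∈ T := by
      intro m _
      show |((0:ℤ):ℝ)| ≤ δ/2 * lam n m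
      simp only [Int.cast_zero, abs_zero]
      exact mul_nonneg (by linarith) (hlpos n m).le
    have hJpos : 0 < JS.ncard := (Set.ncard_pos hJfin).2 ⟨0, hGsubJ (hTsubG h0T)⟩
    refine ⟨hJpos, ?_⟩
    -- boundary cubes
    set Bd : Set (Fin d → ℤ) := {j : Fin d → ℤ |
        (Set.univ.pi (fun i => Set.Icc (a * (j i : ℝ)) (a * ((j i : ℝ) + 1))) ∩
          closure R₀).Nonempty ∧
        (Set.univ.pi (fun i => Set.Icc (a * (j i : ℝ)) (a * ((j i : ℝ) + 1))) ∩
          closure R₀ᶜ).Nonempty} with hBd_def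
    have hBdcard : (Bd.ncard : ℝ) ≤ C * a ^ ((1:ℤ) - d) := hbd a hapos ha1
    have hclosure_sub : closure R₀ ⊆ {y : Fin d → ℝ | ∀ m, |y m| ≤ 1/2} := by
      apply closure_minimal
      · intro x hx m; exact habs x hx m
      · have heq : {y : Fin d → ℝ | ∀ m, |y m| ≤ 1/2} =
            Set.univ.pi (fun _ => Set.Icc (-(1/2):ℝ) (1/2)) := by
          ext y
          simp [Set.mem_pi, abs_le, Pi.le_def]
          exact forall_and
        rw [heq]
        exact isClosed_set_pi (fun m _ => isClosed_Icc)
    have hBdfin : Bd.Finite := by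
      apply Set.Finite.subset (Set.Finite.pi
        (fun m => aux_finite_Icc ((-(1/2) - a)/a) ((1/2)/a)))
      rintro j ⟨⟨x, hxc, hxR⟩, -⟩
      intro m _
      have h1 := hxc m (Set.mem_univ m)
      have h2 : |x m| ≤ 1/2 := hclosure_sub hxR m
      rw [abs_le] at h2
      constructor
      · rw [div_le_iff₀ hapos]
        nlinarith [h1.2]
      · rw [le_div_iff₀ hapos]
        nlinarith [h1.1]
    have hBadmap : ∀ v ∈ JS \ G, ∃ j, j ∈ Bd ∧
        ∀ m, |(v m : ℝ)/lam n m - a * (j m : ℝ)| ≤ 2*a := by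
      rintro v ⟨hvJ, hvG⟩
      have hpR : (fun m => (v m:ℝ)/lam n m) ∈ R₀ := hpmem v hvJ
      rw [hG_def, Set.mem_setOf_eq] at hvG
      push_neg at hvG
      obtain ⟨z, hz, hqR⟩ := hvG
      obtain ⟨w, hwseg, hwc1, hwc2⟩ := aux_segment_frontier hpR hqR
      have hwp : ∀ m, |w m - (v m:ℝ)/lam n m| ≤ a/2 := by
        intro m
        have h1 := aux_segment_coord hwseg m
        have h2 : (fun m => ((v m:ℝ) + z m)/lam n m) m - (fun m => (v m:ℝ)/lam n m) m
            = z m / lam n m := by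
          simp only
          rw [div_sub_div_same, add_sub_cancel_left]
        rw [h2] at h1
        have h3 : |z m / lam n m| ≤ a/2 := by
          rw [abs_div, abs_of_pos (hlpos n m), div_le_iff₀ (hlpos n m)]
          have h4 := ha_ge m
          have h5 := hz m
          linarith
        exact le_trans h1 h3
      set j : Fin d → ℤ := fun m => ⌊w m / a⌋ with hj_def
      have hcube : ∀ m, a * (j m:ℝ) ≤ w m ∧ w m ≤ a * ((j m:ℝ)+1) := by
        intro m
        constructor
        · have h1 := Int.floor_le (w m / a)
          calc a * (j m:ℝ) ≤ a * (w m / a) := mul_le_mul_of_nonneg_left h1 hapos.le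
            _ = w m := by field_simp
        · have h1 := (Int.lt_floor_add_one (w m / a)).le
          calc w m = a * (w m / a) := by field_simp
            _ ≤ a * ((j m:ℝ)+1) := mul_le_mul_of_nonneg_left h1 hapos.le
      refine ⟨j, ⟨⟨w, fun m _ => ⟨(hcube m).1, (hcube m).2⟩, hwc1⟩,
        ⟨w, fun m _ => ⟨(hcube m).1, (hcube m).2⟩, hwc2⟩⟩, ?_⟩
      intro m
      have h1 := hwp m
      have h2 := (hcube m).1
      have h3 := (hcube m).2
      have h4 : |(v m:ℝ)/lam n m - a * (j m:ℝ)| ≤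
          |(v m:ℝ)/lam n m - w m| + |w m - a * (j m:ℝ)| := by
        calc |(v m:ℝ)/lam n m - a * (j m:ℝ)|
            = |((v m:ℝ)/lam n m - w m) + (w m - a * (j m:ℝ))| := by congr 1; ring
          _ ≤ _ := abs_add_le _ _
      have h5 : |w m - a * (j m:ℝ)| ≤ a := by
        rw [abs_le]; constructor <;> nlinarith
      have h6 : |(v m:ℝ)/lam n m - w m| ≤ a/2 := by rw [abs_sub_comm]; exact h1
      linarith
    set f : (Fin d → ℤ) → (Fin d → ℤ) := fun v =>
      if h : ∃ j, j ∈ Bd ∧ ∀ m, |(v m : ℝ)/lam n m - a * (j m : ℝ)| ≤ 2*a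
      then h.choose else fun _ => 0 with hf_def
    have hfmem : ∀ v ∈ JS \ G, f v ∈ Bd ∧
        ∀ m, |(v m:ℝ)/lam n m - a * ((f v) m : ℝ)| ≤ 2*a := by
      intro v hv
      have h := hBadmap v hv
      have hfeq : f v = h.choose := by
        simp only [hf_def]
        exact dif_pos h
      rw [hfeq]
      exact h.choose_spec
    have hfib : ∀ jj ∈ Bd, (({v ∈ JS \ G | f v = jj}).ncard : ℝ) ≤
        ∏ m, (5 * (a * lam n m)) := by
      intro jj hjj
      have hsubfib : {v ∈ JS \ G | f v = jj} ⊆ Set.univ.pi (fun m =>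
          {t : ℤ | (t:ℝ) ∈ Set.Icc (lam n m * (a * (jj m:ℝ)) - 2*a*lam n m)
            (lam n m * (a * (jj m:ℝ)) + 2*a*lam n m)}) := by
        rintro v ⟨hv, hfv⟩
        intro m _
        have h1 := (hfmem v hv).2 m
        rw [hfv] at h1
        rw [abs_le] at h1
        have h3 := hlpos n m
        have hveq : (v m:ℝ) = lam n m * ((v m:ℝ)/lam n m) := by field_simp
        constructor
        · have h5 : a * (jj m:ℝ) - 2*a ≤ (v m:ℝ)/lam n m := by linarith
          have h6 := mul_le_mul_of_nonneg_left h5 h3.le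
          rw [← hveq] at h6
          nlinarith
        · have h5 : (v m:ℝ)/lam n m ≤ a * (jj m:ℝ) + 2*a := by linarith
          have h6 := mul_le_mul_of_nonneg_left h5 h3.le
          rw [← hveq] at h6
          nlinarith
      calc (({v ∈ JS \ G | f v = jj}).ncard : ℝ)
          ≤ ((Set.univ.pi (fun m =>
              {t : ℤ | (t:ℝ) ∈ Set.Icc (lam n m * (a * (jj m:ℝ)) - 2*a*lam n m)
                (lam n m * (a * (jj m:ℝ)) + 2*a*lam n m)})).ncard : ℝ) := by
            exact_mod_cast Nat.cast_le.2 (Set.ncard_le_ncard hsubfib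
              (Set.Finite.pi fun m => aux_finite_Icc _ _))
        _ = ∏ m, (({t : ℤ | (t:ℝ) ∈ Set.Icc (lam n m * (a * (jj m:ℝ)) - 2*a*lam n m)
              (lam n m * (a * (jj m:ℝ)) + 2*a*lam n m)}).ncard : ℝ) := by
            rw [aux_ncard_univ_pi]; push_cast; rfl
        _ ≤ ∏ m, (5 * (a * lam n m)) := by
            apply Finset.prod_le_prod (fun m _ => Nat.cast_nonneg _)
            intro m _
            have h3 := hlpos n m
            have h4 := halam m
            calc (({t : ℤ | (t:ℝ) ∈ Set.Icc (lam n m * (a * (jj m:ℝ)) - 2*a*lam n m)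
                  (lam n m * (a * (jj m:ℝ)) + 2*a*lam n m)}).ncard : ℝ)
                ≤ (lam n m * (a * (jj m:ℝ)) + 2*a*lam n m) -
                  (lam n m * (a * (jj m:ℝ)) - 2*a*lam n m) + 1 :=
                  aux_count_le (by nlinarith)
              _ = 4*(a*lam n m) + 1 := by ring
              _ ≤ 5*(a*lam n m) := by linarith
    have hBad : ((JS \ G).ncard : ℝ) ≤ (Bd.ncard : ℝ) * ∏ m, (5*(a*lam n m)) :=
      aux_fiber_count (hJfin.diff) hBdfin (fun v hv => (hfmem v hv).1)
        (Finset.prod_nonneg fun m _ => mul_nonneg (by norm_num) (mul_nonneg hapos.le (hlpos n m).le)) hfib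
    have hPpos : 0 < ∏ m, lam n m := Finset.prod_pos (fun m _ => hlpos n m)
    have hprod : ∏ m : Fin d, (5*(a*lam n m)) = (5*a)^d * ∏ m, lam n m := by
      calc ∏ m : Fin d, (5*(a*lam n m)) = ∏ m : Fin d, ((5*a)*lam n m) := by
            apply Finset.prod_congr rfl; intro m _; ring
        _ = (5*a)^d * ∏ m, lam n m := by
            rw [Finset.prod_mul_distrib, Finset.prod_const, Finset.card_univ, Fintype.card_fin]
    have hBadfinal : ((JS \ G).ncard : ℝ) ≤ C * 5^d * a * ∏ m, lam n m := by
      have h1 : (Bd.ncard : ℝ) * ∏ m, (5*(a*lam n m)) ≤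
          (C * a^((1:ℤ)-d)) * ((5*a)^d * ∏ m, lam n m) := by
        rw [hprod]
        apply mul_le_mul_of_nonneg_right hBdcard (mul_nonneg (pow_nonneg (by linarith) d) hPpos.le)
      have h3 : a^((1:ℤ)-(d:ℤ)) * a^(d:ℕ) = a := by
        rw [← zpow_natCast a d, ← zpow_add₀ hapos.ne']
        norm_num
      have h2 : (C * a^((1:ℤ)-d)) * ((5*a)^d * ∏ m, lam n m) =
          C * 5^d * a * ∏ m, lam n m := by
        rw [mul_pow]
        calc C * a^((1:ℤ)-(d:ℤ)) * ((5:ℝ)^d * a^(d:ℕ) * ∏ m, lam n m)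
            = C * 5^d * (a^((1:ℤ)-(d:ℤ)) * a^(d:ℕ)) * ∏ m, lam n m := by ring
          _ = C * 5^d * a * ∏ m, lam n m := by rw [h3]
      linarith [hBad, h1, h2.symm.le]
    -- final assembly
    intro k hk
    have hKsub : JS \ (JS ∩ {v | v + k ∈ JS}) ⊆ JS \ G := by
      intro v hv
      exact ⟨hv.1, fun hvG => hv.2 ⟨hv.1, hGsubK k hk v hvG⟩⟩
    have hseteq : {v : Fin d → ℤ |
          ((fun x m => (v m : ℝ) + slam n m * x m) '' R₀ ⊆
            (fun x m => lam n m * x m) '' R₀) ∧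
          (fun x m => ((v m : ℝ) + (k m : ℝ)) + slam n m * x m) '' R₀ ⊆
            (fun x m => lam n m * x m) '' R₀}
        = JS ∩ {v | v + k ∈ JS} := by
      ext v
      have hfun : (fun (x : Fin d → ℝ) m => ((v m:ℝ) + (k m:ℝ)) + slam n m * x m) =
          (fun (x : Fin d → ℝ) m => (((v + k) m : ℤ):ℝ) + slam n m * x m) := by
        funext x m
        simp only [Pi.add_apply]
        push_cast
        ring
      simp only [Set.mem_setOf_eq, Set.mem_inter_iff, hJS_def]
      rw [hfun]
    rw [hseteq]
    have hJkle : (JS ∩ {v | v + k ∈ JS}).ncard ≤ JS.ncard :=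
      Set.ncard_le_ncard Set.inter_subset_left hJfin
    have hdiffc : (JS \ (JS ∩ {v | v + k ∈ JS})).ncard =
        JS.ncard - (JS ∩ {v | v + k ∈ JS}).ncard :=
      Set.ncard_diff Set.inter_subset_left (hJfin.subset Set.inter_subset_left)
    have hdle : ((JS \ (JS ∩ {v | v + k ∈ JS})).ncard : ℝ) ≤ ((JS \ G).ncard : ℝ) := by
      exact_mod_cast Set.ncard_le_ncard hKsub hJfin.diff
    have hnum : (JS.ncard : ℝ) - (JS ∩ {v | v + k ∈ JS}).ncard ≤
        C * 5^d * a * ∏ m, lam n m := by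
      have hcast : ((JS.ncard - (JS ∩ {v | v + k ∈ JS}).ncard : ℕ) : ℝ) =
          (JS.ncard : ℝ) - (JS ∩ {v | v + k ∈ JS}).ncard := by
        rw [Nat.cast_sub hJkle]
      rw [← hcast, ← hdiffc]
      exact le_trans hdle hBadfinal
    have hJge : (δ/2)^d * ∏ m, lam n m ≤ (JS.ncard : ℝ) := by
      apply le_trans hTcard
      exact_mod_cast Set.ncard_le_ncard (hTsubG.trans hGsubJ) hJfin
    have hJposR : (0:ℝ) < JS.ncard := by exact_mod_cast hJpos
    have habs1 : |1 - ((JS ∩ {v | v + k ∈ JS}).ncard:ℝ)/(JS.ncard:ℝ)| =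
        ((JS.ncard:ℝ) - (JS ∩ {v | v + k ∈ JS}).ncard)/(JS.ncard:ℝ) := by
      rw [abs_of_nonneg]
      · rw [sub_div, div_self hJposR.ne']
      · have h1 : ((JS ∩ {v | v + k ∈ JS}).ncard:ℝ)/(JS.ncard:ℝ) ≤ 1 := by
          rw [div_le_one hJposR]; exact_mod_cast hJkle
        linarith
    rw [habs1]
    have hTlowpos : (0:ℝ) < (δ/2)^d * ∏ m, lam n m := mul_pos (pow_pos (by linarith) d) hPpos
    calc ((JS.ncard:ℝ) - (JS ∩ {v | v + k ∈ JS}).ncard)/(JS.ncard:ℝ)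
        ≤ (C * 5^d * a * ∏ m, lam n m) / ((δ/2)^d * ∏ m, lam n m) :=
          div_le_div₀ (mul_nonneg (mul_nonneg (mul_nonneg hC.le (by positivity)) hapos.le)
            hPpos.le) hnum hTlowpos hJge
      _ = (C * 5^d * a) / (δ/2)^d := mul_div_mul_right _ _ hPpos.ne'
      _ < ε := by
          rw [div_lt_iff₀ (pow_pos (by linarith : (0:ℝ) < δ/2) d)]
          have h5 : (0:ℝ) < C * 5^d := mul_pos hC (by positivity)
          rw [lt_div_iff₀ h5] at c3
          nlinarith [c3]
  constructor
  · obtain ⟨N, hN⟩ := main 1 one_pos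
    exact ⟨N, fun n hn => (hN n hn).1⟩
  · intro ε hε
    obtain ⟨N, hN⟩ := main ε hε
    exact ⟨N, fun n hn k hk => (hN n hn).2 k hk⟩
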